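/- arXiv:1712.07086 — 2 statements merged into one kernel-verified Lean document; each statement's English description precedes it below -/
import Mathlib

section
/- Let G be a finite connected full substar graph with host tree T and intersection model {S_x}_{x ∈ V(G)}, and let X be any node of T. If lpt(G) > 1 (i.e., no single vertex of G lies on all longest paths), then there exist a longest path P of G and a node Y ∈ N_T(X) such that every vertex of P has its star centered at a node lying in the connected component of T − X that contains Y (i.e., V(P) ⊆ C^X_Y). -/
open SimpleGraph

/-- `p` is a longest path of `G`: it is a path, and no path of `G` is longer. -/
def IsLongestPath {V : Type*} (G : SimpleGraph V) {u v : V} (p : G.Walk u v) : Prop :=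
  p.IsPath ∧ ∀ ⦃a b : V⦄ (q : G.Walk a b), q.IsPath → q.length ≤ p.length

/-- An intersection model of `G` by full substars of a tree `T`: each vertex `x` of `G`
is assigned a full substar of `T` with center `center x` and leaf set `leaves x`, where
`leaves x` is a set of neighbors of `center x` in `T` of cardinality at least
`d_T(center x) - 1`; two distinct vertices of `G` are adjacent iff the vertex sets
`{center x} ∪ leaves x` of their substars intersect. -/
structure SubstarModel {V τ : Type*} (G : SimpleGraph V) (T : SimpleGraph τ) where
  isTree : T.IsTree
  center : V → τ
  leaves : V → Set τ
  leaves_sub : ∀ x : V, leaves x ⊆ T.neighborSet (center x)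
  leaves_card : ∀ x : V, (T.neighborSet (center x)).ncard - 1 ≤ (leaves x).ncard
  adj_iff : ∀ x y : V, G.Adj x y ↔ x ≠ y ∧
    ((insert (center x) (leaves x) : Set τ) ∩ insert (center y) (leaves y)).Nonempty

namespace FSS

variable {V τ : Type*}

/-! ### Lists as paths -/

def listToWalk (G : SimpleGraph V) : (l : List V) → (h : l.Chain' G.Adj) → (hne : l ≠ []) →
    G.Walk (l.head hne) (l.getLast hne)
  | [x], _, _ => Walk.nil
  | x :: y :: t, h, _ =>
      Walk.cons (List.isChain_cons_cons.1 h).1 (listToWalk G (y :: t) (List.isChain_cons_cons.1 h).2 (by simp))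

theorem listToWalk_support (G : SimpleGraph V) : ∀ (l : List V) (h : l.Chain' G.Adj) (hne : l ≠ []),
    (listToWalk G l h hne).support = l
  | [x], _, _ => by simp [listToWalk]
  | x :: y :: t, h, _ => by
      simp only [listToWalk, Walk.support_cons]
      exact congrArg (x :: ·) (listToWalk_support G (y :: t) _ _)

theorem listToWalk_length (G : SimpleGraph V) (l : List V) (h : l.Chain' G.Adj) (hne : l ≠ []) :
    (listToWalk G l h hne).length + 1 = l.length := by
  rw [← SimpleGraph.Walk.length_support, listToWalk_support]

theorem listToWalk_isPath (G : SimpleGraph V) (l : List V) (h : l.Chain' G.Adj) (hne : l ≠ [])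
    (hnd : l.Nodup) : (listToWalk G l h hne).IsPath := by
  rw [Walk.isPath_def, listToWalk_support]; exact hnd

/-- A maximum-length path, as a list of vertices. -/
def MaxList (G : SimpleGraph V) (l : List V) : Prop :=
  l ≠ [] ∧ l.Chain' G.Adj ∧ l.Nodup ∧
    ∀ l' : List V, l' ≠ [] → l'.Chain' G.Adj → l'.Nodup → l'.length ≤ l.length

theorem maxlist_of_longest (G : SimpleGraph V) {a b : V} (p : G.Walk a b)
    (hp : IsLongestPath G p) : MaxList G p.support := by
  refine ⟨p.support_ne_nil, p.isChain_adj_support, hp.1.2, fun l' h1 h2 h3 => ?_⟩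
  have := hp.2 (listToWalk G l' h2 h1) (listToWalk_isPath G l' h2 h1 h3)
  have h4 := listToWalk_length G l' h2 h1
  have h5 := p.length_support
  omega

theorem maxlist_to_longest (G : SimpleGraph V) (l : List V) (hl : MaxList G l) :
    ∃ (a b : V) (p : G.Walk a b), IsLongestPath G p ∧ p.support = l := by
  obtain ⟨hne, hch, hnd, hmax⟩ := hl
  refine ⟨_, _, listToWalk G l hch hne, ⟨listToWalk_isPath G l hch hne hnd, ?_⟩,
    listToWalk_support G l hch hne⟩
  intro a b q hq
  have h1 := hmax q.support q.support_ne_nil q.isChain_adj_support hq.2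
  have h2 := q.length_support
  have h3 := listToWalk_length G l hch hne
  omega

/-- Every vertex is avoided by some longest path (as a list). -/
theorem maxlist_avoid (G : SimpleGraph V)
    (hlpt : ¬ ∃ x : V, ∀ ⦃a b : V⦄ (p : G.Walk a b), IsLongestPath G p → x ∈ p.support)
    (x : V) : ∃ l : List V, MaxList G l ∧ x ∉ l := by
  push_neg at hlpt
  obtain ⟨a, b, p, hp, hx⟩ := hlpt x
  exact ⟨p.support, maxlist_of_longest G p hp, hx⟩

/-! ### Substar model basics -/

variable {G : SimpleGraph V} {T : SimpleGraph τ}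

def st (M : SubstarModel G T) (x : V) : Set τ := insert (M.center x) (M.leaves x)

theorem center_mem_st (M : SubstarModel G T) (x : V) : M.center x ∈ st M x :=
  Set.mem_insert _ _

theorem adj_iff' (M : SubstarModel G T) (x y : V) :
    G.Adj x y ↔ x ≠ y ∧ (st M x ∩ st M y).Nonempty := M.adj_iff x y

theorem kk_adj (M : SubstarModel G T) {X : τ} {x y : V} (hx : X ∈ st M x) (hy : X ∈ st M y)
    (hne : x ≠ y) : G.Adj x y := (adj_iff' M x y).2 ⟨hne, X, hx, hy⟩

theorem st_sub (M : SubstarModel G T) {x : V} {t : τ} (ht : t ∈ st M x) :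
    t = M.center x ∨ T.Adj (M.center x) t := by
  rcases ht with h | h
  · exact Or.inl h
  · exact Or.inr (M.leaves_sub x h)

/-! ### Reachability avoiding X -/

def Reach (T : SimpleGraph τ) (X a b : τ) : Prop := ∃ w : T.Walk a b, X ∉ w.support

theorem reach_refl {X a : τ} (h : a ≠ X) : Reach T X a a := ⟨Walk.nil, by simp [Ne.symm h]⟩

theorem reach_symm {X a b : τ} (h : Reach T X a b) : Reach T X b a := by
  obtain ⟨w, hw⟩ := h; exact ⟨w.reverse, by simpa using hw⟩

theorem reach_trans {X a b c : τ} (h1 : Reach T X a b) (h2 : Reach T X b c) : Reach T X a c := by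
  obtain ⟨w1, hw1⟩ := h1; obtain ⟨w2, hw2⟩ := h2
  refine ⟨w1.append w2, ?_⟩
  rw [Walk.mem_support_append_iff]
  tauto

theorem reach_step {X a b : τ} (ha : a ≠ X) (hb : b ≠ X) (h : a = b ∨ T.Adj a b) :
    Reach T X a b := by
  rcases h with rfl | h
  · exact reach_refl ha
  · exact ⟨Walk.cons h Walk.nil, by simp [Ne.symm ha, Ne.symm hb]⟩

/-- Lemma G: if `p ~ z`, `p`'s star avoids `X` and `z` is not centered at `X`, then
their centers are connected avoiding `X`. -/
theorem lemG (M : SubstarModel G T) {X : τ} {p z : V} (hadj : G.Adj p z)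
    (hp : X ∉ st M p) (hz : M.center z ≠ X) :
    Reach T X (M.center z) (M.center p) := by
  obtain ⟨-, t, htp, htz⟩ := (adj_iff' M p z).1 hadj
  have htX : t ≠ X := fun h => hp (h ▸ htp)
  have hpX : M.center p ≠ X := fun h => hp (h ▸ center_mem_st M p)
  have h1 : Reach T X (M.center z) t := reach_step hz htX ((st_sub M htz).imp Eq.symm id)
  have h2 : Reach T X (M.center p) t := reach_step hpX htX ((st_sub M htp).imp Eq.symm id)
  exact reach_trans h1 (reach_symm h2)

section listlemmas
variable {α : Type*} {R : α → α → Prop}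

theorem chain'_of_consecutive : ∀ {l : List α},
    (∀ (s t : List α) (x y : α), l = s ++ x :: y :: t → R x y) → l.Chain' R
  | [], _ => List.isChain_nil
  | [x], _ => List.isChain_singleton x
  | x :: y :: t, h => List.isChain_cons_cons.2 ⟨h [] t x y rfl,
      chain'_of_consecutive (fun s t' a b hdec => h (x :: s) t' a b (by rw [hdec]; rfl))⟩

theorem chain_all_of_head (htrans : ∀ (a b c : α), R a b → R b c → R a c) :
    ∀ {x : α} {t : List α}, List.Chain' R (x :: t) → ∀ b ∈ t, R x b
  | x, [], _, b, hb => by simp at hb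
  | x, y :: t', hch, b, hb => by
      have h1 : R x y := (List.isChain_cons_cons.1 hch).1
      rcases List.mem_cons.1 hb with rfl | hb'
      · exact h1
      · exact htrans _ _ _ h1 (chain_all_of_head htrans (List.isChain_cons_cons.1 hch).2 b hb')

theorem chain_pairwise (hsymm : ∀ (a b : α), R a b → R b a)
    (htrans : ∀ (a b c : α), R a b → R b c → R a c) {l : List α} (hch : List.Chain' R l)
    (hrefl : ∀ a ∈ l, R a a) : ∀ a ∈ l, ∀ b ∈ l, R a b := by
  induction l with
  | nil => intro a ha; simp at ha
  | cons x t ih =>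
      intro a ha b hb
      rcases List.mem_cons.1 ha with ha1 | ha' <;> rcases List.mem_cons.1 hb with hb1 | hb'
      · rw [ha1, hb1]; exact hrefl x (by simp)
      · rw [ha1]; exact chain_all_of_head htrans hch b hb'
      · rw [hb1]; exact hsymm _ _ (chain_all_of_head htrans hch a ha')
      · exact ih hch.tail (fun c hc => hrefl c (List.mem_cons.2 (Or.inr hc))) a ha' b hb'
end listlemmas

theorem extend_contra {G : SimpleGraph V} {l : List V} (hl : MaxList G l) {v : V} (hv : v ∉ l)
    {s₁ : List V} {z : V} {s₂ : List V} (hdec : l = s₁ ++ z :: s₂) (hadj : G.Adj v z) :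
    s₁ ≠ [] ∧ s₂ ≠ [] ∧ (∀ p ∈ s₁.getLast?, ¬ G.Adj v p) ∧ (∀ q ∈ s₂.head?, ¬ G.Adj v q) := by
  obtain ⟨hne, hch, hnd, hmax⟩ := hl
  subst hdec
  have contra : ∀ l' : List V, l'.length = (s₁ ++ z :: s₂).length + 1 → l'.Chain' G.Adj →
      l'.Nodup → False := by
    intro l' h1 h2 h3
    have := hmax l' (by rintro rfl; simp at h1) h2 h3
    omega
  rw [List.Chain', List.isChain_append] at hch
  obtain ⟨hc1, hc2, hglue⟩ := hch
  rw [List.nodup_append'] at hnd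
  obtain ⟨hn1, hn2, hdisj⟩ := hnd
  rw [List.mem_append] at hv
  push_neg at hv
  obtain ⟨hv1, hv2⟩ := hv
  have hvz : v ≠ z := fun h => hv2 (h ▸ List.mem_cons_self (a := z) (l := s₂))
  refine ⟨?_, ?_, ?_, ?_⟩
  · rintro rfl
    exact contra (v :: z :: s₂) (by simp) (List.isChain_cons_cons.2 ⟨hadj, hc2⟩)
      (List.nodup_cons.2 ⟨hv2, hn2⟩)
  · rintro rfl
    refine contra (s₁ ++ [z, v]) (by simp) (List.isChain_append.2 ⟨hc1, ?_, ?_⟩)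
      (List.nodup_append'.2 ⟨hn1, ?_, ?_⟩)
    · exact List.isChain_pair.2 hadj.symm
    · intro x hx y hy
      simp only [List.head?_cons, Option.mem_some_iff] at hy
      subst hy
      exact hglue x hx z (by simp)
    · simp [hvz.symm]
    · intro a ha hb
      simp only [List.mem_cons, List.not_mem_nil, or_false] at hb
      rcases hb with rfl | rfl
      · exact hdisj ha (by simp)
      · exact hv1 ha
  · intro p hp hvp
    refine contra (s₁ ++ v :: z :: s₂) (by simp; omega) (List.isChain_append.2
      ⟨hc1, List.isChain_cons_cons.2 ⟨hadj, hc2⟩, ?_⟩) (List.nodup_append'.2 ⟨hn1, ?_, ?_⟩)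
    · intro x hx y hy
      simp only [List.head?_cons, Option.mem_some_iff] at hy
      subst hy
      have hxp : x = p := Option.some_injective _
        ((Option.mem_def.1 hx).symm.trans (Option.mem_def.1 hp))
      subst hxp
      exact hvp.symm
    · exact List.nodup_cons.2 ⟨hv2, hn2⟩
    · intro a ha hb
      simp only [List.mem_cons] at hb
      rcases hb with rfl | hb
      · exact hv1 ha
      · exact hdisj ha (List.mem_cons.2 hb)
  · intro q hq hvq
    obtain ⟨s₂', rfl⟩ : ∃ s₂', s₂ = q :: s₂' := by
      cases s₂ with
      | nil => simp at hq
      | cons a t => simp only [List.head?_cons, Option.mem_some_iff] at hq; exact ⟨t, by rw [hq]⟩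
    refine contra (s₁ ++ z :: v :: q :: s₂') (by simp; omega) (List.isChain_append.2
      ⟨hc1, ?_, ?_⟩) (List.nodup_append'.2 ⟨hn1, ?_, ?_⟩)
    · exact List.isChain_cons_cons.2 ⟨hadj.symm, List.isChain_cons_cons.2 ⟨hvq, (List.isChain_cons_cons.1 hc2).2⟩⟩
    · intro x hx y hy
      simp only [List.head?_cons, Option.mem_some_iff] at hy
      subst hy
      exact hglue x hx z (by simp)
    · have h1 := List.nodup_cons.1 hn2
      have hv2' : v ∉ q :: s₂' := fun h => hv2 (List.mem_cons.2 (Or.inr h))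
      refine List.nodup_cons.2 ⟨?_, List.nodup_cons.2 ⟨hv2', h1.2⟩⟩
      intro h
      rcases List.mem_cons.1 h with h2 | h2
      · exact hvz h2.symm
      · exact h1.1 h2
    · intro a ha hb
      rcases List.mem_cons.1 hb with rfl | hb
      · exact hdisj ha (by simp)
      · rcases List.mem_cons.1 hb with rfl | hb
        · exact hv1 ha
        · exact hdisj ha (List.mem_cons.2 (Or.inr hb))


theorem consec_reach (M : SubstarModel G T) {X : τ} {l : List V} (hl : MaxList G l) {v : V}
    (hvK : X ∈ st M v) (hvl : v ∉ l) {s t : List V} {x y : V} (hdec : l = s ++ x :: y :: t)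
    (hx : M.center x ≠ X) (hy : M.center y ≠ X) : Reach T X (M.center x) (M.center y) := by
  have hxy : G.Adj x y := by
    have hch := hl.2.1
    rw [hdec, List.Chain', List.isChain_append] at hch
    exact (List.isChain_cons_cons.1 hch.2.1).1
  by_cases hxK : X ∈ st M x
  · have hxv : x ≠ v := fun h => hvl (h ▸ (by rw [hdec]; simp : x ∈ l))
    have hyv : y ≠ v := fun h => hvl (h ▸ (by rw [hdec]; simp : y ∈ l))
    have hvx : G.Adj v x := kk_adj M hvK hxK (Ne.symm hxv)
    obtain ⟨-, -, -, hq⟩ := extend_contra hl hvl hdec hvx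
    have hvy : ¬ G.Adj v y := hq y (by simp)
    have hyK : X ∉ st M y := fun h => hvy (kk_adj M hvK h (Ne.symm hyv))
    exact lemG M hxy.symm hyK hx
  · exact reach_symm (lemG M hxy hxK hy)

theorem typeA_class [Fintype τ] (M : SubstarModel G T) {X : τ} {w : V} (hw : M.center w = X)
    (hnf : ¬ T.neighborSet X ⊆ M.leaves w) :
    ∃ m, T.Adj X m ∧ st M w = insert X (T.neighborSet X \ {m}) := by
  obtain ⟨m, hmN, hm⟩ := Set.not_subset.1 hnf
  have hsub : M.leaves w ⊆ T.neighborSet X \ {m} := by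
    intro a ha
    refine ⟨hw ▸ M.leaves_sub w ha, ?_⟩
    simp only [Set.mem_singleton_iff]
    rintro rfl; exact hm ha
  have hfin : (T.neighborSet X).Finite := Set.toFinite _
  have h2 : (T.neighborSet X \ {m}).ncard = (T.neighborSet X).ncard - 1 := by
    rw [Set.ncard_diff_singleton_of_mem hmN]
  have h1 := M.leaves_card w
  rw [hw] at h1
  have heq := Set.eq_of_subset_of_ncard_le hsub (by omega) hfin.diff
  exact ⟨m, hmN, by rw [show st M w = insert (M.center w) (M.leaves w) from rfl, hw, heq]⟩

theorem cross_star (M : SubstarModel G T) {X : τ} {w z p : V} {m mz : τ}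
    (hstw : st M w = insert X (T.neighborSet X \ {m}))
    (hstz : st M z = insert X (T.neighborSet X \ {mz}))
    (hadj : G.Adj p z) (hpw : ¬ G.Adj p w) (hpwne : p ≠ w) :
    m ∈ st M p ∧ X ∉ st M p ∧ m ≠ mz := by
  have hempty : ∀ t', t' ∈ st M p → t' ∈ st M w → False := by
    intro t' h1 h2; exact hpw ((adj_iff' M p w).2 ⟨hpwne, t', h1, h2⟩)
  obtain ⟨-, t', htp, htz⟩ := (adj_iff' M p z).1 hadj
  have hXw : X ∈ st M w := by rw [hstw]; exact Set.mem_insert _ _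
  have hXp : X ∉ st M p := fun h => hempty X h hXw
  rw [hstz] at htz
  rcases htz with rfl | ⟨htN, htm⟩
  · exact absurd htp hXp
  · have htm' : t' = m := by
      by_contra hne
      exact hempty t' htp (by
        rw [hstw]
        exact Set.mem_insert_of_mem _ ⟨htN, by simpa using hne⟩)
    subst htm'
    exact ⟨htp, hXp, fun h => htm (by simp [h])⟩

theorem tree_sep (hT : T.IsTree) {X m₀ m₁ : τ} (h₀ : T.Adj X m₀) (h₁ : T.Adj X m₁)
    (hne : m₀ ≠ m₁) : ¬ Reach T X m₀ m₁ := by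
  letI := Classical.decEq τ
  rintro ⟨w, hw⟩
  obtain ⟨p, -, hu⟩ := hT.existsUnique_path m₀ m₁
  have hexp : (Walk.cons h₀.symm (Walk.cons h₁ Walk.nil) : T.Walk m₀ m₁).IsPath := by
    rw [Walk.isPath_def]
    simp [h₀.ne', h₁.ne', hne, Ne.symm h₀.ne', h₁.ne]
  have h2 := hu _ hexp
  have h3 := hu _ w.toPath.2
  have hX : X ∈ (w.toPath : T.Walk m₀ m₁).support := by
    rw [h3, ← h2]; simp
  exact hw (Walk.support_toPath_subset w hX)


theorem two_typeA_contra (M : SubstarModel G T) {X : τ} {l : List V} (hl : MaxList G l)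
    {w : V} (hwl : w ∉ l) {m m₁ m₂ : τ} (hm : T.Adj X m)
    (hstw : st M w = insert X (T.neighborSet X \ {m}))
    {c₁ c₂ c₃ : List V} {z₁ z₂ : V}
    (hdec : l = c₁ ++ z₁ :: (c₂ ++ z₂ :: c₃))
    (hst₁ : st M z₁ = insert X (T.neighborSet X \ {m₁}))
    (hst₂ : st M z₂ = insert X (T.neighborSet X \ {m₂})) : False := by
  have hXw : X ∈ st M w := by rw [hstw]; exact Set.mem_insert _ _
  have hX₁ : X ∈ st M z₁ := by rw [hst₁]; exact Set.mem_insert _ _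
  have hX₂ : X ∈ st M z₂ := by rw [hst₂]; exact Set.mem_insert _ _
  have hz₁l : z₁ ∈ l := by rw [hdec]; simp
  have hz₂l : z₂ ∈ l := by rw [hdec]; simp
  have hz₁w : z₁ ≠ w := fun h => hwl (h ▸ hz₁l)
  have hz₂w : z₂ ≠ w := fun h => hwl (h ▸ hz₂l)
  have hwz₁ : G.Adj w z₁ := kk_adj M hXw hX₁ (Ne.symm hz₁w)
  have hwz₂ : G.Adj w z₂ := kk_adj M hXw hX₂ (Ne.symm hz₂w)
  obtain ⟨hc₁ne, -, hp₁n, hq₁n⟩ := extend_contra hl hwl hdec hwz₁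
  have hc₂ne : c₂ ≠ [] := by
    rintro rfl
    exact hq₁n z₂ (by simp) hwz₂
  obtain ⟨p₁, hp₁e⟩ : ∃ p₁, c₁.getLast? = some p₁ := ⟨_, List.getLast?_eq_getLast hc₁ne⟩
  obtain ⟨q₁, hq₁e⟩ : ∃ q₁, c₂.head? = some q₁ := ⟨_, List.head?_eq_head hc₂ne⟩
  obtain ⟨p₂, hp₂e⟩ : ∃ p₂, c₂.getLast? = some p₂ := ⟨_, List.getLast?_eq_getLast hc₂ne⟩
  have hdec₂ : l = (c₁ ++ z₁ :: c₂) ++ z₂ :: c₃ := by rw [hdec]; simp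
  obtain ⟨-, hc₃ne, hp₂n, hq₂n⟩ := extend_contra hl hwl hdec₂ hwz₂
  obtain ⟨q₂, hq₂e⟩ : ∃ q₂, c₃.head? = some q₂ := ⟨_, List.head?_eq_head hc₃ne⟩
  -- chain facts
  have hch := hl.2.1
  rw [hdec, List.Chain', List.isChain_append] at hch
  obtain ⟨hchc₁, hchm, hglue₁⟩ := hch
  obtain ⟨hz₁hd, hchmid⟩ := List.isChain_cons.1 hchm
  obtain ⟨hchc₂, hchz₂c₃, hglue₂⟩ := List.isChain_append.1 hchmid
  obtain ⟨hz₂hd, hchc₃⟩ := List.isChain_cons.1 hchz₂c₃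
  have hmid_hd : (c₂ ++ z₂ :: c₃).head? = some q₁ := by
    rw [List.head?_append, hq₁e]; rfl
  have hadj_p₁z₁ : G.Adj p₁ z₁ := hglue₁ p₁ hp₁e z₁ (by simp)
  have hadj_z₁q₁ : G.Adj z₁ q₁ := hz₁hd q₁ hmid_hd
  have hadj_p₂z₂ : G.Adj p₂ z₂ := hglue₂ p₂ hp₂e z₂ (by simp)
  have hadj_z₂q₂ : G.Adj z₂ q₂ := hz₂hd q₂ hq₂e
  -- nonadjacency to w
  have hwp₁ : ¬ G.Adj w p₁ := hp₁n p₁ hp₁e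
  have hwq₁ : ¬ G.Adj w q₁ := hq₁n q₁ hmid_hd
  have hwp₂ : ¬ G.Adj w p₂ := by
    refine hp₂n p₂ ?_
    rw [List.getLast?_append]
    rw [show (z₁ :: c₂).getLast? = c₂.getLast?.or ([z₁].getLast?) from List.getLast?_append (l := [z₁]), hp₂e]
    rfl
  have hwq₂ : ¬ G.Adj w q₂ := hq₂n q₂ hq₂e
  -- memberships
  have hp₁c₁ : p₁ ∈ c₁ := List.mem_of_mem_getLast? hp₁e
  have hq₁c₂ : q₁ ∈ c₂ := List.mem_of_mem_head? hq₁e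
  have hp₂c₂ : p₂ ∈ c₂ := List.mem_of_mem_getLast? hp₂e
  have hq₂c₃ : q₂ ∈ c₃ := List.mem_of_mem_head? hq₂e
  have hp₁w : p₁ ≠ w := fun h => hwl (h ▸ (by rw [hdec]; simp [hp₁c₁] : p₁ ∈ l))
  have hq₁w : q₁ ≠ w := fun h => hwl (h ▸ (by rw [hdec]; simp [hq₁c₂] : q₁ ∈ l))
  have hp₂w : p₂ ≠ w := fun h => hwl (h ▸ (by rw [hdec]; simp [hp₂c₂] : p₂ ∈ l))
  have hq₂w : q₂ ≠ w := fun h => hwl (h ▸ (by rw [hdec]; simp [hq₂c₃] : q₂ ∈ l))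
  -- star facts
  obtain ⟨hmp₁, hXp₁, hmm₁⟩ := cross_star M hstw hst₁ hadj_p₁z₁ (fun h => hwp₁ h.symm) hp₁w
  obtain ⟨hmq₁, hXq₁, -⟩ := cross_star M hstw hst₁ hadj_z₁q₁.symm (fun h => hwq₁ h.symm) hq₁w
  obtain ⟨hmp₂, hXp₂, hmm₂⟩ := cross_star M hstw hst₂ hadj_p₂z₂ (fun h => hwp₂ h.symm) hp₂w
  obtain ⟨hmq₂, hXq₂, -⟩ := cross_star M hstw hst₂ hadj_z₂q₂.symm (fun h => hwq₂ h.symm) hq₂w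
  have hmz₂ : m ∈ st M z₂ := by
    rw [hst₂]
    exact Set.mem_insert_of_mem _ ⟨hm, by simpa using hmm₂⟩
  -- nodup facts
  have hnd := hl.2.2.1
  rw [hdec, List.nodup_append'] at hnd
  obtain ⟨hndc₁, hndm, hdisj₁⟩ := hnd
  obtain ⟨hz₁nm, hnd₂⟩ := List.nodup_cons.1 hndm
  rw [List.nodup_append'] at hnd₂
  obtain ⟨hndc₂, hndz₂c₃, hdisj₂⟩ := hnd₂
  obtain ⟨hz₂nc₃, hndc₃⟩ := List.nodup_cons.1 hndz₂c₃
  have hz₁z₂ : z₁ ≠ z₂ := fun h => hz₁nm (by rw [h]; simp)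
  have hz₂nc₂ : z₂ ∉ c₂ := fun h => hdisj₂ h (by simp)
  have hz₂nc₁ : z₂ ∉ c₁ := fun h => hdisj₁ h (by simp)
  have hz₁nc₂ : z₁ ∉ c₂ := fun h => hz₁nm (by simp [h])
  have hz₁nc₃ : z₁ ∉ c₃ := fun h => hz₁nm (by simp [h])
  -- new list
  have hmax := hl.2.2.2
  have hlen : (c₁ ++ z₂ :: w :: z₁ :: (c₂ ++ c₃)).length = l.length + 1 := by
    rw [hdec]; simp; omega
  have hchain : (c₁ ++ z₂ :: w :: z₁ :: (c₂ ++ c₃)).Chain' G.Adj := by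
    refine List.isChain_append.2 ⟨hchc₁, ?_, ?_⟩
    · refine List.isChain_cons_cons.2 ⟨kk_adj M hX₂ hXw hz₂w, List.isChain_cons_cons.2 ⟨hwz₁, ?_⟩⟩
      refine List.isChain_cons.2 ⟨?_, ?_⟩
      · intro y hy
        rw [List.head?_append, hq₁e] at hy
        have : y = q₁ := by simpa using hy.symm
        rw [this]; exact hadj_z₁q₁
      · refine List.isChain_append.2 ⟨hchc₂, hchc₃, ?_⟩
        intro x hx y hy
        have hx' : x = p₂ := by rw [hp₂e] at hx; simpa using hx.symm
        have hy' : y = q₂ := by rw [hq₂e] at hy; simpa using hy.symm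
        rw [hx', hy']
        refine (adj_iff' M p₂ q₂).2 ⟨?_, m, hmp₂, hmq₂⟩
        rintro rfl
        exact hdisj₂ hp₂c₂ (by simp [hq₂c₃])
    · intro x hx y hy
      have hx' : x = p₁ := by rw [hp₁e] at hx; simpa using hx.symm
      have hy' : y = z₂ := by simpa using hy.symm
      rw [hx', hy']
      refine (adj_iff' M p₁ z₂).2 ⟨?_, m, hmp₁, hmz₂⟩
      rintro rfl
      exact hz₂nc₁ hp₁c₁
  have hnodup : (c₁ ++ z₂ :: w :: z₁ :: (c₂ ++ c₃)).Nodup := by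
    refine List.nodup_append'.2 ⟨hndc₁, ?_, ?_⟩
    · refine List.nodup_cons.2 ⟨?_, List.nodup_cons.2 ⟨?_, List.nodup_cons.2 ⟨?_, ?_⟩⟩⟩
      · intro h
        rcases List.mem_cons.1 h with h1 | h1
        · exact hz₂w h1
        rcases List.mem_cons.1 h1 with h2 | h2
        · exact hz₁z₂ h2.symm
        rcases List.mem_append.1 h2 with h3 | h3
        · exact hz₂nc₂ h3
        · exact hz₂nc₃ h3
      · intro h
        rcases List.mem_cons.1 h with h1 | h1
        · exact hz₁w h1.symm
        rcases List.mem_append.1 h1 with h3 | h3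
        · exact hwl (by rw [hdec]; simp [h3])
        · exact hwl (by rw [hdec]; simp [h3])
      · intro h
        rcases List.mem_append.1 h with h3 | h3
        · exact hz₁nc₂ h3
        · exact hz₁nc₃ h3
      · refine List.nodup_append'.2 ⟨hndc₂, hndc₃, ?_⟩
        intro a ha hb
        exact hdisj₂ ha (by simp [hb])
    · intro a ha hb
      have hal : a ∈ l := by rw [hdec]; simp [ha]
      rcases List.mem_cons.1 hb with h1 | h1
      · exact hz₂nc₁ (h1 ▸ ha)
      rcases List.mem_cons.1 h1 with h2 | h2
      · exact hwl (h2 ▸ hal)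
      rcases List.mem_cons.1 h2 with h3 | h3
      · exact hdisj₁ ha (by simp [h3])
      rcases List.mem_append.1 h3 with h4 | h4
      · exact hdisj₁ ha (by simp [h4])
      · exact hdisj₁ ha (by simp [h4])
  have := hmax _ (by intro h; rw [h] at hlen; simp at hlen) hchain hnodup
  omega


theorem confined_generic (M : SubstarModel G T) {X : τ} {l : List V} (hml : MaxList G l)
    (hnoA : ∀ z ∈ l, M.center z ≠ X)
    (hcons : ∀ (s t : List V) (x y : V), l = s ++ x :: y :: t →
      Reach T X (M.center x) (M.center y)) :
    ∃ (l' : List V) (c₀ : τ), MaxList G l' ∧ c₀ ≠ X ∧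
      ∀ z ∈ l', Reach T X c₀ (M.center z) := by
  have hchR : l.Chain' (fun a b => Reach T X (M.center a) (M.center b)) :=
    chain'_of_consecutive hcons
  have hpair := chain_pairwise (R := fun a b => Reach T X (M.center a) (M.center b))
    (fun a b h => reach_symm h) (fun a b c h1 h2 => reach_trans h1 h2) hchR
    (fun a ha => reach_refl (hnoA a ha))
  refine ⟨l, M.center (l.head hml.1), hml, hnoA _ (List.head_mem hml.1), ?_⟩
  exact fun z hz => hpair _ (List.head_mem hml.1) z hz

theorem anchored_reach (M : SubstarModel G T) {X : τ} {l : List V} (hl : MaxList G l)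
    {w : V} (hwl : w ∉ l) {m mu : τ} (hm : T.Adj X m)
    (hstw : st M w = insert X (T.neighborSet X \ {m}))
    {s₁ s₂ : List V} {u : V} (hdec : l = s₁ ++ u :: s₂)
    (hstu : st M u = insert X (T.neighborSet X \ {mu}))
    (huniq : ∀ z ∈ l, M.center z = X → z = u) :
    ∀ z ∈ l, z ≠ u → Reach T X m (M.center z) := by
  have hXw : X ∈ st M w := by rw [hstw]; exact Set.mem_insert _ _
  have hXu : X ∈ st M u := by rw [hstu]; exact Set.mem_insert _ _
  have hul : u ∈ l := by rw [hdec]; simp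
  have huw : u ≠ w := fun h => hwl (h ▸ hul)
  have hwu : G.Adj w u := kk_adj M hXw hXu (Ne.symm huw)
  obtain ⟨hs₁ne, hs₂ne, hpn, hqn⟩ := extend_contra hl hwl hdec hwu
  obtain ⟨p, hpe⟩ : ∃ p, s₁.getLast? = some p := ⟨_, List.getLast?_eq_getLast hs₁ne⟩
  obtain ⟨q, hqe⟩ : ∃ q, s₂.head? = some q := ⟨_, List.head?_eq_head hs₂ne⟩
  have hch := hl.2.1
  rw [hdec, List.Chain', List.isChain_append] at hch
  obtain ⟨hchs₁, hchus₂, hglue⟩ := hch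
  have hadj_pu : G.Adj p u := hglue p hpe u (by simp)
  have hadj_uq : G.Adj u q := (List.isChain_cons.1 hchus₂).1 q hqe
  have hpl : p ∈ l := by rw [hdec]; simp [List.mem_of_mem_getLast? hpe]
  have hql : q ∈ l := by rw [hdec]; simp [List.mem_of_mem_head? hqe]
  have hpw : p ≠ w := fun h => hwl (h ▸ hpl)
  have hqw : q ≠ w := fun h => hwl (h ▸ hql)
  obtain ⟨hmp, hXp, -⟩ := cross_star M hstw hstu hadj_pu
    (fun h => hpn p hpe h.symm) hpw
  obtain ⟨hmq, hXq, -⟩ := cross_star M hstw hstu hadj_uq.symm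
    (fun h => hqn q hqe h.symm) hqw
  have hmX : m ≠ X := hm.ne'
  have hcpX : M.center p ≠ X := fun h => hXp (h ▸ center_mem_st M p)
  have hcqX : M.center q ≠ X := fun h => hXq (h ▸ center_mem_st M q)
  have hrp : Reach T X m (M.center p) :=
    reach_symm (reach_step hcpX hmX ((st_sub M hmp).imp Eq.symm id))
  have hrq : Reach T X m (M.center q) :=
    reach_symm (reach_step hcqX hmX ((st_sub M hmq).imp Eq.symm id))
  -- nodup facts
  have hnd := hl.2.2.1
  rw [hdec, List.nodup_append'] at hnd
  have hus₁ : u ∉ s₁ := fun h => hnd.2.2 h (by simp)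
  have hus₂ : u ∉ s₂ := (List.nodup_cons.1 hnd.2.1).1
  have hnoA₁ : ∀ z ∈ s₁, M.center z ≠ X := by
    intro z hz hzX
    exact hus₁ ((huniq z (by rw [hdec]; simp [hz]) hzX) ▸ hz)
  have hnoA₂ : ∀ z ∈ s₂, M.center z ≠ X := by
    intro z hz hzX
    exact hus₂ ((huniq z (by rw [hdec]; simp [hz]) hzX) ▸ hz)
  have hch₁ : s₁.Chain' (fun a b => Reach T X (M.center a) (M.center b)) := by
    refine chain'_of_consecutive ?_
    intro s t x y hdec'
    refine consec_reach M hl hXw hwl (s := s) (t := t ++ u :: s₂)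
      (by rw [hdec, hdec']; simp) ?_ ?_
    · exact hnoA₁ x (by rw [hdec']; simp)
    · exact hnoA₁ y (by rw [hdec']; simp)
  have hch₂ : s₂.Chain' (fun a b => Reach T X (M.center a) (M.center b)) := by
    refine chain'_of_consecutive ?_
    intro s t x y hdec'
    refine consec_reach M hl hXw hwl (s := s₁ ++ u :: s) (t := t)
      (by rw [hdec, hdec']; simp) ?_ ?_
    · exact hnoA₂ x (by rw [hdec']; simp)
    · exact hnoA₂ y (by rw [hdec']; simp)
  have hpair₁ := chain_pairwise (R := fun a b => Reach T X (M.center a) (M.center b))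
    (fun a b h => reach_symm h) (fun a b c h1 h2 => reach_trans h1 h2) hch₁
    (fun a ha => reach_refl (hnoA₁ a ha))
  have hpair₂ := chain_pairwise (R := fun a b => Reach T X (M.center a) (M.center b))
    (fun a b h => reach_symm h) (fun a b c h1 h2 => reach_trans h1 h2) hch₂
    (fun a ha => reach_refl (hnoA₂ a ha))
  intro z hz hzu
  rw [hdec] at hz
  rcases List.mem_append.1 hz with hz1 | hz1
  · exact reach_trans hrp (hpair₁ p (List.mem_of_mem_getLast? hpe) z hz1)
  · rcases List.mem_cons.1 hz1 with rfl | hz2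
    · exact absurd rfl hzu
    · exact reach_trans hrq (hpair₂ q (List.mem_of_mem_head? hqe) z hz2)

theorem arm_last {l : List V} (hch : l.Chain' G.Adj) (hnd : l.Nodup) {a b : List V} {u : V}
    (hdec : l = a ++ u :: b) :
    ∃ α : List V, α.Chain' G.Adj ∧ α.Nodup ∧ (∀ x ∈ α, x ∈ l) ∧
      α.getLast? = some u ∧ l.length + 1 ≤ 2 * α.length := by
  have hlen : l.length = a.length + b.length + 1 := by rw [hdec]; simp; omega
  rcases le_total b.length a.length with h | h
  · have hpref : (a ++ [u]) <+: l := ⟨b, by rw [hdec]; simp⟩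
    refine ⟨a ++ [u], hch.prefix hpref, hnd.sublist hpref.sublist,
      fun x hx => hpref.subset hx, List.getLast?_concat, by simp; omega⟩
  · have hsuf : (u :: b) <:+ l := ⟨a, hdec.symm⟩
    refine ⟨(u :: b).reverse, ?_, ?_, ?_, ?_, ?_⟩
    · exact List.isChain_reverse.2 ((hch.suffix hsuf).imp (fun x y hxy => hxy.symm))
    · exact List.nodup_reverse.2 (hnd.sublist hsuf.sublist)
    · intro x hx
      exact hsuf.subset (List.mem_reverse.1 hx)
    · rw [List.getLast?_reverse]; rfl
    · simp; omega

theorem arm_head {l : List V} (hch : l.Chain' G.Adj) (hnd : l.Nodup) {a b : List V} {u : V}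
    (hdec : l = a ++ u :: b) :
    ∃ β : List V, β.Chain' G.Adj ∧ β.Nodup ∧ (∀ x ∈ β, x ∈ l) ∧
      β.head? = some u ∧ l.length + 1 ≤ 2 * β.length := by
  have hdec' : l.reverse = b.reverse ++ u :: a.reverse := by rw [hdec]; simp
  have hch' : l.reverse.Chain' G.Adj :=
    List.isChain_reverse.2 (hch.imp (fun x y hxy => hxy.symm))
  obtain ⟨α, h1, h2, h3, h4, h5⟩ := arm_last hch' (List.nodup_reverse.2 hnd) hdec'
  refine ⟨α.reverse, ?_, List.nodup_reverse.2 h2, ?_, ?_, ?_⟩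
  · exact List.isChain_reverse.2 (h1.imp (fun x y hxy => hxy.symm))
  · intro x hx
    exact List.mem_reverse.1 (h3 x (List.mem_reverse.1 hx))
  · rw [List.head?_reverse]; exact h4
  · simp at h5 ⊢; omega

theorem glue_contra {l₁ l₂ : List V} (hml₁ : MaxList G l₁) (hml₂ : MaxList G l₂)
    (hdisj : ∀ z, z ∈ l₁ → z ∈ l₂ → False) {u₁ u₂ : V} (hadj : G.Adj u₁ u₂)
    {a₁ b₁ a₂ b₂ : List V} (hdec₁ : l₁ = a₁ ++ u₁ :: b₁) (hdec₂ : l₂ = a₂ ++ u₂ :: b₂) :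
    False := by
  obtain ⟨α, hc1, hn1, hm1, hl1, hb1⟩ := arm_last hml₁.2.1 hml₁.2.2.1 hdec₁
  obtain ⟨β, hc2, hn2, hm2, hl2, hb2⟩ := arm_head hml₂.2.1 hml₂.2.2.1 hdec₂
  have hαne : α ≠ [] := by rintro rfl; simp at hl1
  have hchain : (α ++ β).Chain' G.Adj := by
    refine List.isChain_append.2 ⟨hc1, hc2, ?_⟩
    intro x hx y hy
    rw [hl1] at hx
    rw [hl2] at hy
    have hx' : x = u₁ := by simpa using hx.symm
    have hy' : y = u₂ := by simpa using hy.symm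
    rw [hx', hy']; exact hadj
  have hnodup : (α ++ β).Nodup := by
    refine List.nodup_append'.2 ⟨hn1, hn2, ?_⟩
    intro x hx hy
    exact hdisj x (hm1 x hx) (hm2 x hy)
  have h1 := hml₁.2.2.2 (α ++ β) (by simp [hαne]) hchain hnodup
  have h2 := hml₁.2.2.2 l₂ hml₂.1 hml₂.2.1 hml₂.2.2.1
  have h3 := hml₂.2.2.2 l₁ hml₁.1 hml₁.2.1 hml₁.2.2.1
  rw [List.length_append] at h1
  omega

end FSS

/-- For a finite connected full substar graph `G` with host tree `T`, and any node `X`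
of `T`: if no single vertex of `G` lies on all longest paths (`lpt(G) > 1`), then there
are a longest path `P` and a neighbor `Y` of `X` in `T` such that every vertex of `P`
has its substar centered at a node of the component of `T - X` containing `Y`
(witnessed by a walk in `T` from `Y` to the center avoiding `X`). -/
theorem longest_path_in_one_branch {V τ : Type*} [Fintype V] [Fintype τ]
    (G : SimpleGraph V) (T : SimpleGraph τ) (M : SubstarModel G T)
    (hconn : G.Connected) (X : τ)
    (hlpt : ¬ ∃ x : V, ∀ ⦃a b : V⦄ (p : G.Walk a b), IsLongestPath G p → x ∈ p.support) :
    ∃ Y : τ, T.Adj X Y ∧ ∃ (a b : V) (p : G.Walk a b), IsLongestPath G p ∧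
      ∀ z ∈ p.support, ∃ w : T.Walk Y (M.center z), X ∉ w.support := by
  classical
  have havoid : ∀ x : V, ∃ l : List V, FSS.MaxList G l ∧ x ∉ l := FSS.maxlist_avoid G hlpt
  suffices h : ∃ (l : List V) (c₀ : τ), FSS.MaxList G l ∧ c₀ ≠ X ∧
      ∀ z ∈ l, FSS.Reach T X c₀ (M.center z) by
    obtain ⟨l, c₀, hml, hc₀, hreach⟩ := h
    obtain ⟨wXc⟩ := M.isTree.isConnected.preconnected X c₀
    obtain ⟨Y, hXY, q0, hq0⟩ :=
      SimpleGraph.Walk.exists_eq_cons_of_ne (Ne.symm hc₀) (wXc.toPath : T.Walk X c₀)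
    have hXq : X ∉ q0.support := by
      have hp := wXc.toPath.2
      rw [hq0] at hp
      exact ((SimpleGraph.Walk.cons_isPath_iff _ _).1 hp).2
    obtain ⟨a, b, p, hlp, hsup⟩ := FSS.maxlist_to_longest G l hml
    refine ⟨Y, hXY, a, b, p, hlp, ?_⟩
    intro z hz
    rw [hsup] at hz
    obtain ⟨wz, hwz⟩ := hreach z hz
    exact ⟨q0.append wz, by rw [SimpleGraph.Walk.mem_support_append_iff]; tauto⟩
  by_cases hA : ∃ v : V, M.center v = X
  · by_cases hfull : ∃ v : V, M.center v = X ∧ T.neighborSet X ⊆ M.leaves v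
    · obtain ⟨v, hvX, hvfull⟩ := hfull
      obtain ⟨l, hml, hvl⟩ := havoid v
      have hvK : X ∈ FSS.st M v := hvX ▸ FSS.center_mem_st M v
      have hnoA : ∀ z ∈ l, M.center z ≠ X := by
        intro z hz hzX
        have hzv : z ≠ v := fun h => hvl (h ▸ hz)
        have hvz : G.Adj v z := FSS.kk_adj M hvK (hzX ▸ FSS.center_mem_st M z) (Ne.symm hzv)
        obtain ⟨s₁, s₂, hdec⟩ := List.append_of_mem hz
        obtain ⟨-, hs₂ne, -, hqn⟩ := FSS.extend_contra hml hvl hdec hvz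
        obtain ⟨qq, hqe⟩ : ∃ qq, s₂.head? = some qq := ⟨_, List.head?_eq_head hs₂ne⟩
        have hchm := hml.2.1
        rw [hdec, List.Chain', List.isChain_append] at hchm
        have hadj_zq : G.Adj z qq := (List.isChain_cons.1 hchm.2.1).1 qq hqe
        obtain ⟨hzq_ne, t, htz, htq⟩ := (FSS.adj_iff' M z qq).1 hadj_zq
        have htv : t ∈ FSS.st M v := by
          rcases FSS.st_sub M htz with h | h
          · rw [h, hzX, ← hvX]; exact FSS.center_mem_st M v
          · rw [hzX] at h
            exact Set.mem_insert_of_mem _ (hvfull h)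
        have hqv : qq ≠ v := fun h =>
          hvl (h ▸ (by rw [hdec]; simp [List.mem_of_mem_head? hqe] : qq ∈ l))
        exact hqn qq hqe ((FSS.adj_iff' M v qq).2 ⟨Ne.symm hqv, t, htv, htq⟩)
      exact FSS.confined_generic M hml hnoA (fun s t x y hdec =>
        FSS.consec_reach M hml hvK hvl hdec (hnoA x (by rw [hdec]; simp))
          (hnoA y (by rw [hdec]; simp)))
    · -- Case 3 : centers at X exist but none is full
      push_neg at hfull
      obtain ⟨w₀, hw₀X⟩ := hA
      obtain ⟨m₀, hm₀, hstw₀⟩ := FSS.typeA_class M hw₀X (hfull w₀ hw₀X)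
      have hXw₀ : X ∈ FSS.st M w₀ := hw₀X ▸ FSS.center_mem_st M w₀
      obtain ⟨l₁, hml₁, hw₀l₁⟩ := havoid w₀
      by_cases hA₁ : ∃ u ∈ l₁, M.center u = X
      · obtain ⟨u₁, hu₁l, hu₁X⟩ := hA₁
        obtain ⟨m₁, hm₁, hstu₁⟩ := FSS.typeA_class M hu₁X (hfull u₁ hu₁X)
        have hXu₁ : X ∈ FSS.st M u₁ := hu₁X ▸ FSS.center_mem_st M u₁
        have huniq₁ : ∀ z ∈ l₁, M.center z = X → z = u₁ := by
          intro z hz hzX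
          by_contra hne
          obtain ⟨mz, hmz, hstz⟩ := FSS.typeA_class M hzX (hfull z hzX)
          obtain ⟨s, t, hdec⟩ := List.append_of_mem hu₁l
          have hz' : z ∈ s ∨ z ∈ t := by
            rw [hdec] at hz
            rcases List.mem_append.1 hz with h | h
            · exact Or.inl h
            · rcases List.mem_cons.1 h with h1 | h1
              · exact absurd h1 hne
              · exact Or.inr h1
          rcases hz' with hzs | hzt
          · obtain ⟨s', t', hdec'⟩ := List.append_of_mem hzs
            exact FSS.two_typeA_contra M hml₁ hw₀l₁ hm₀ hstw₀
              (show l₁ = s' ++ z :: (t' ++ u₁ :: t) by rw [hdec, hdec']; simp) hstz hstu₁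
          · obtain ⟨s', t', hdec'⟩ := List.append_of_mem hzt
            exact FSS.two_typeA_contra M hml₁ hw₀l₁ hm₀ hstw₀
              (show l₁ = s ++ u₁ :: (s' ++ z :: t') by rw [hdec, hdec']) hstu₁ hstz
        obtain ⟨s₁, s₂, hdecu₁⟩ := List.append_of_mem hu₁l
        have hu₁w₀ : u₁ ≠ w₀ := fun h => hw₀l₁ (h ▸ hu₁l)
        have hwu₁ : G.Adj w₀ u₁ := FSS.kk_adj M hXw₀ hXu₁ (Ne.symm hu₁w₀)
        obtain ⟨hs₁ne, -, hpn, -⟩ := FSS.extend_contra hml₁ hw₀l₁ hdecu₁ hwu₁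
        obtain ⟨pp, hpe⟩ : ∃ pp, s₁.getLast? = some pp := ⟨_, List.getLast?_eq_getLast hs₁ne⟩
        have hchl₁ := hml₁.2.1
        rw [hdecu₁, List.Chain', List.isChain_append] at hchl₁
        have hadj_pu : G.Adj pp u₁ := hchl₁.2.2 pp hpe u₁ (by simp)
        have hppw : pp ≠ w₀ := fun h => hw₀l₁
          (h ▸ (by rw [hdecu₁]; simp [List.mem_of_mem_getLast? hpe] : pp ∈ l₁))
        obtain ⟨-, -, hm₀m₁⟩ :=
          FSS.cross_star M hstw₀ hstu₁ hadj_pu (fun h => hpn pp hpe h.symm) hppw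
        obtain ⟨l₂, hml₂, hu₁l₂⟩ := havoid u₁
        by_cases hA₂ : ∃ u ∈ l₂, M.center u = X
        · obtain ⟨u₂, hu₂l, hu₂X⟩ := hA₂
          obtain ⟨m₂, hm₂, hstu₂⟩ := FSS.typeA_class M hu₂X (hfull u₂ hu₂X)
          have huniq₂ : ∀ z ∈ l₂, M.center z = X → z = u₂ := by
            intro z hz hzX
            by_contra hne
            obtain ⟨mz, hmz, hstz⟩ := FSS.typeA_class M hzX (hfull z hzX)
            obtain ⟨s, t, hdec⟩ := List.append_of_mem hu₂l
            have hz' : z ∈ s ∨ z ∈ t := by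
              rw [hdec] at hz
              rcases List.mem_append.1 hz with h | h
              · exact Or.inl h
              · rcases List.mem_cons.1 h with h1 | h1
                · exact absurd h1 hne
                · exact Or.inr h1
            rcases hz' with hzs | hzt
            · obtain ⟨s', t', hdec'⟩ := List.append_of_mem hzs
              exact FSS.two_typeA_contra M hml₂ hu₁l₂ hm₁ hstu₁
                (show l₂ = s' ++ z :: (t' ++ u₂ :: t) by rw [hdec, hdec']; simp) hstz hstu₂
            · obtain ⟨s', t', hdec'⟩ := List.append_of_mem hzt
              exact FSS.two_typeA_contra M hml₂ hu₁l₂ hm₁ hstu₁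
                (show l₂ = s ++ u₂ :: (s' ++ z :: t') by rw [hdec, hdec']) hstu₂ hstz
          obtain ⟨a₂, b₂, hdecu₂⟩ := List.append_of_mem hu₂l
          have hreach₁ : ∀ z ∈ l₁, z ≠ u₁ → FSS.Reach T X m₀ (M.center z) :=
            FSS.anchored_reach M hml₁ hw₀l₁ hm₀ hstw₀ hdecu₁ hstu₁ huniq₁
          have hreach₂ : ∀ z ∈ l₂, z ≠ u₂ → FSS.Reach T X m₁ (M.center z) :=
            FSS.anchored_reach M hml₂ hu₁l₂ hm₁ hstu₁ hdecu₂ hstu₂ huniq₂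
          have hdisj : ∀ z, z ∈ l₁ → z ∈ l₂ → False := by
            intro z h1 h2
            have hzu₁ : z ≠ u₁ := fun h => hu₁l₂ (h ▸ h2)
            have hzu₂ : z ≠ u₂ := by
              rintro rfl
              exact hzu₁ (huniq₁ z h1 hu₂X)
            exact FSS.tree_sep M.isTree hm₀ hm₁ hm₀m₁
              (FSS.reach_trans (hreach₁ z h1 hzu₁) (FSS.reach_symm (hreach₂ z h2 hzu₂)))
          have hu₁u₂ : u₁ ≠ u₂ := fun h => hu₁l₂ (h ▸ hu₂l)
          have hadj₁₂ : G.Adj u₁ u₂ :=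
            FSS.kk_adj M hXu₁ (hu₂X ▸ FSS.center_mem_st M u₂) hu₁u₂
          exact (FSS.glue_contra hml₁ hml₂ hdisj hadj₁₂ hdecu₁ hdecu₂).elim
        · push_neg at hA₂
          exact FSS.confined_generic M hml₂ hA₂ (fun s t x y hdec =>
            FSS.consec_reach M hml₂ hXu₁ hu₁l₂ hdec (hA₂ x (by rw [hdec]; simp))
              (hA₂ y (by rw [hdec]; simp)))
      · push_neg at hA₁
        exact FSS.confined_generic M hml₁ hA₁ (fun s t x y hdec =>
          FSS.consec_reach M hml₁ hXw₀ hw₀l₁ hdec (hA₁ x (by rw [hdec]; simp))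
            (hA₁ y (by rw [hdec]; simp)))
  · by_cases hK : ∃ v : V, X ∈ FSS.st M v
    · obtain ⟨v, hvK⟩ := hK
      obtain ⟨l, hml, hvl⟩ := havoid v
      have hnoA : ∀ z ∈ l, M.center z ≠ X := fun z hz hzX => hA ⟨z, hzX⟩
      exact FSS.confined_generic M hml hnoA (fun s t x y hdec =>
        FSS.consec_reach M hml hvK hvl hdec (hnoA x (by rw [hdec]; simp))
          (hnoA y (by rw [hdec]; simp)))
    · push_neg at hK
      obtain ⟨x₀⟩ := hconn.nonempty
      obtain ⟨l, hml, -⟩ := havoid x₀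
      have hnoA : ∀ z ∈ l, M.center z ≠ X := fun z hz hzX => hK z (hzX ▸ FSS.center_mem_st M z)
      refine FSS.confined_generic M hml hnoA ?_
      intro s t x y hdec
      have hch := hml.2.1
      rw [hdec, List.Chain', List.isChain_append] at hch
      have hxy : G.Adj x y := (List.isChain_cons_cons.1 hch.2.1).1
      exact FSS.reach_symm (FSS.lemG M hxy (hK x) (hnoA y (by rw [hdec]; simp)))
end

section
/- Let G be a finite full substar graph with host tree T and intersection model {S_x}_{x ∈ V(G)}. Let x ∈ V(G) with center c(x) = X, and let P be a longest path of G with x ∉ V(P). Then there exists a node Y ∈ N_T(X) such that: (i) V(P) ⊆ C^X_Y ∪ C_X; (ii) |V(P) ∩ C_X| ≤ 1; and moreover, if |V(P) ∩ C_X| = 1, then Y ∉ V(S_x). -/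
open SimpleGraph

section Aux

variable {V τ : Type*} {G : SimpleGraph V} {T : SimpleGraph τ}

lemma nodup_of_multiset_eq {α : Type*} {l₁ l₂ : List α}
    (h : (l₁ : Multiset α) = (l₂ : Multiset α)) (h₂ : l₂.Nodup) : l₁.Nodup := by
  rw [← Multiset.coe_nodup] at h₂ ⊢
  rwa [h]

lemma adj_of_common (M : SubstarModel G T) {y z : V} (hne : y ≠ z) {W : τ}
    (h1 : W ∈ insert (M.center y) (M.leaves y)) (h2 : W ∈ insert (M.center z) (M.leaves z)) :
    G.Adj y z := (M.adj_iff y z).2 ⟨hne, W, h1, h2⟩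

lemma not_adj_start {x a b : V} {P : G.Walk a b} (hP : IsLongestPath G P)
    (hx : x ∉ P.support) : ¬ G.Adj x a := fun h => by
  have := hP.2 (Walk.cons h P) (hP.1.cons hx)
  simp [Walk.length_cons] at this

lemma not_adj_end {x a b : V} {P : G.Walk a b} (hP : IsLongestPath G P)
    (hx : x ∉ P.support) : ¬ G.Adj x b := fun h => by
  have := hP.2 (Walk.cons h P.reverse)
    (hP.1.reverse.cons (by simpa [Walk.support_reverse] using hx))
  simp [Walk.length_cons, Walk.length_reverse] at this

lemma dart_split {a b : V} (P : G.Walk a b) {d : G.Dart} (hd : d ∈ P.darts) :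
    ∃ (A : G.Walk a d.fst) (B : G.Walk d.snd b), P = A.append (Walk.cons d.adj B) := by
  induction P with
  | nil => simp at hd
  | cons h p ih =>
    rw [Walk.darts_cons, List.mem_cons] at hd
    rcases hd with rfl | hd
    · exact ⟨Walk.nil, p, rfl⟩
    · obtain ⟨A, B, hAB⟩ := ih hd
      exact ⟨Walk.cons h A, B, by rw [Walk.cons_append, hAB]⟩

lemma no_consec {x a b : V} {P : G.Walk a b} (hP : IsLongestPath G P)
    (hx : x ∉ P.support) : ∀ d ∈ P.darts, ¬ (G.Adj x d.fst ∧ G.Adj x d.snd) := by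
  rintro d hd ⟨h1, h2⟩
  obtain ⟨A, B, hdef⟩ := dart_split P hd
  have hQpath : (A.append (Walk.cons h1.symm (Walk.cons h2 B))).IsPath := by
    rw [Walk.isPath_def]
    apply nodup_of_multiset_eq (l₂ := x :: P.support)
    · rw [hdef]
      simp only [Walk.support_append, Walk.support_cons, List.tail_cons]
      simp only [← Multiset.cons_coe, ← Multiset.coe_add]
      simp only [← Multiset.singleton_add]
      abel
    · exact List.nodup_cons.2 ⟨hx, hP.1.support_nodup⟩
  have hle := hP.2 _ hQpath
  rw [hdef] at hle
  simp only [Walk.length_append, Walk.length_cons] at hle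
  omega

lemma darts_fact (M : SubstarModel G T) {x a b : V} {P : G.Walk a b}
    (hP : IsLongestPath G P) (hx : x ∉ P.support) :
    ∀ e ∈ P.darts, ¬ (M.center x ∈ insert (M.center e.fst) (M.leaves e.fst) ∧
      M.center x ∈ insert (M.center e.snd) (M.leaves e.snd)) := by
  rintro e he ⟨h1, h2⟩
  have hf : e.fst ∈ P.support := Walk.dart_fst_mem_support_of_mem_darts _ he
  have hs : e.snd ∈ P.support := Walk.dart_snd_mem_support_of_mem_darts _ he
  have hxf : x ≠ e.fst := fun h => hx (h ▸ hf)
  have hxs : x ≠ e.snd := fun h => hx (h ▸ hs)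
  exact no_consec hP hx e he
    ⟨adj_of_common M hxf (Set.mem_insert _ _) h1, adj_of_common M hxs (Set.mem_insert _ _) h2⟩

lemma missing_unique [Fintype τ] (M : SubstarModel G T) (x : V) {W W' : τ}
    (hW : T.Adj (M.center x) W) (hW' : T.Adj (M.center x) W')
    (h1 : W ∉ M.leaves x) (h2 : W' ∉ M.leaves x) : W = W' := by
  have hsub := M.leaves_sub x
  have hcard := M.leaves_card x
  have hfin : (T.neighborSet (M.center x)).Finite := Set.toFinite _
  have hlf : (M.leaves x).Finite := hfin.subset hsub
  have hlel : (M.leaves x).ncard ≤ (T.neighborSet (M.center x)).ncard :=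
    Set.ncard_le_ncard hsub hfin
  have hd : (T.neighborSet (M.center x) \ M.leaves x).ncard ≤ 1 := by
    rw [Set.ncard_diff hsub hlf]
    omega
  exact (Set.ncard_le_one hfin.diff).1 hd W ⟨hW, h1⟩ W' ⟨hW', h2⟩

lemma missing_leaf (M : SubstarModel G T) {x z w : V}
    (hzc : M.center z = M.center x) (hzx : z ≠ x) (hwx : w ≠ x)
    (hGzw : G.Adj z w) (hnadj : ¬ G.Adj x w) :
    ∃ W : τ, W ∈ insert (M.center w) (M.leaves w) ∧ W ∈ M.leaves z ∧
      T.Adj (M.center x) W ∧ W ∉ M.leaves x ∧ W ≠ M.center x := by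
  obtain ⟨hne, W, h1, h2⟩ := (M.adj_iff z w).1 hGzw
  have hWSx : W ∉ insert (M.center x) (M.leaves x) := fun hmem =>
    hnadj (adj_of_common M (fun h => hwx h.symm) hmem h2)
  have hWne : W ≠ M.center x := fun h => hWSx (h ▸ Set.mem_insert _ _)
  have hWnlx : W ∉ M.leaves x := fun h => hWSx (Set.mem_insert_of_mem _ h)
  have hWlz : W ∈ M.leaves z := by
    rcases Set.mem_insert_iff.1 h1 with h | h
    · exact absurd (h.trans hzc) hWne
    · exact h
  have hWadj : T.Adj (M.center x) W := by
    have := M.leaves_sub z hWlz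
    rw [mem_neighborSet, hzc] at this
    exact this
  exact ⟨W, h2, hWlz, hWadj, hWnlx, hWne⟩

lemma walk_to_mem (M : SubstarModel G T) {w : V} {W : τ}
    (hW : W ∈ insert (M.center w) (M.leaves w)) :
    ∃ r : T.Walk (M.center w) W, ∀ s ∈ r.support, s = M.center w ∨ s = W := by
  rcases Set.mem_insert_iff.1 hW with rfl | h
  · exact ⟨Walk.nil, by simp⟩
  · have hadj : T.Adj (M.center w) W := M.leaves_sub w h
    exact ⟨Walk.cons hadj Walk.nil, by simp⟩

lemma hop (M : SubstarModel G T) {x w₁ w₂ : V} (hadj : G.Adj w₁ w₂)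
    (h₁ : M.center w₁ ≠ M.center x) (h₂ : M.center w₂ ≠ M.center x)
    (hX : ¬ (M.center x ∈ insert (M.center w₁) (M.leaves w₁) ∧
      M.center x ∈ insert (M.center w₂) (M.leaves w₂))) :
    ∃ r : T.Walk (M.center w₁) (M.center w₂), M.center x ∉ r.support := by
  obtain ⟨-, W, hW1, hW2⟩ := (M.adj_iff w₁ w₂).1 hadj
  have hWX : W ≠ M.center x := by rintro rfl; exact hX ⟨hW1, hW2⟩
  obtain ⟨r₁, hr₁⟩ := walk_to_mem M hW1
  obtain ⟨r₂, hr₂⟩ := walk_to_mem M hW2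
  refine ⟨r₁.append r₂.reverse, fun hmem => ?_⟩
  rw [Walk.support_append, List.mem_append] at hmem
  rcases hmem with hmem | hmem
  · rcases hr₁ _ hmem with h | h
    · exact h₁ h.symm
    · exact hWX h.symm
  · have hmem' := List.mem_of_mem_tail hmem
    rw [Walk.support_reverse, List.mem_reverse] at hmem'
    rcases hr₂ _ hmem' with h | h
    · exact h₂ h.symm
    · exact hWX h.symm

lemma propagate (M : SubstarModel G T) {x : V} {Y : τ} :
    ∀ {c₀ d : V} (W : G.Walk c₀ d),
    (∀ e ∈ W.darts, ¬ (M.center x ∈ insert (M.center e.fst) (M.leaves e.fst) ∧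
        M.center x ∈ insert (M.center e.snd) (M.leaves e.snd))) →
    (∀ r ∈ W.support, M.center r ≠ M.center x) →
    (∃ q : T.Walk Y (M.center c₀), M.center x ∉ q.support) →
    ∀ r ∈ W.support, ∃ q : T.Walk Y (M.center r), M.center x ∉ q.support := by
  intro c₀ d W
  induction W with
  | nil =>
    intro _ _ h0 r hr
    rw [Walk.support_nil, List.mem_singleton] at hr
    subst hr; exact h0
  | @cons u w d h p ih =>
    intro hdart hc h0 r hr
    rw [Walk.support_cons, List.mem_cons] at hr
    rcases hr with rfl | hr
    · exact h0
    · refine ih (fun e he => hdart e (by rw [Walk.darts_cons]; exact List.mem_cons_of_mem _ he))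
        (fun s hs => hc s (by rw [Walk.support_cons]; exact List.mem_cons_of_mem _ hs)) ?_ r hr
      obtain ⟨q, hq⟩ := h0
      have hcu : M.center u ≠ M.center x := hc u (by simp)
      have hcw : M.center w ≠ M.center x :=
        hc w (by rw [Walk.support_cons]; exact List.mem_cons_of_mem _ p.start_mem_support)
      have hfirst : (⟨(u, w), h⟩ : G.Dart) ∈ (Walk.cons h p).darts := by
        rw [Walk.darts_cons]; exact List.mem_cons_self
      obtain ⟨r', hr'⟩ := hop M h hcu hcw (hdart _ hfirst)
      refine ⟨q.append r', fun hmem => ?_⟩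
      rw [Walk.support_append, List.mem_append] at hmem
      rcases hmem with hmem | hmem
      · exact hq hmem
      · exact hr' (List.mem_of_mem_tail hmem)

lemma concat_of_ne {a z : V} (t : G.Walk a z) (hne : a ≠ z) :
    ∃ (u : V) (A : G.Walk a u) (hu : G.Adj u z), t = A.concat hu := by
  cases t with
  | nil => exact absurd rfl hne
  | cons h p => exact Walk.exists_cons_eq_concat h p

lemma cons_of_ne {z b : V} (d : G.Walk z b) (hne : z ≠ b) :
    ∃ (v : V) (hv : G.Adj z v) (D : G.Walk v b), d = Walk.cons hv D := by
  cases d with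
  | nil => exact absurd rfl hne
  | cons h p => exact ⟨_, h, p, rfl⟩

lemma split_at_interior [DecidableEq V] {a b z : V} (P : G.Walk a b) (hz : z ∈ P.support)
    (hza : z ≠ a) (hzb : z ≠ b) :
    ∃ (u v : V) (A : G.Walk a u) (hu : G.Adj u z) (hv : G.Adj z v) (D : G.Walk v b),
      P = A.append (Walk.cons hu (Walk.cons hv D)) := by
  obtain ⟨u, A, hu, hA⟩ := concat_of_ne (P.takeUntil z hz) (fun h => hza h.symm)
  obtain ⟨v, hv, D, hD⟩ := cons_of_ne (P.dropUntil z hz) hzb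
  refine ⟨u, v, A, hu, hv, D, ?_⟩
  rw [← P.take_spec hz, hA, hD, Walk.concat_append]

lemma two_centers_aux [DecidableEq V] [Fintype τ] (M : SubstarModel G T) {x a b u v z z' : V}
    {A : G.Walk a u} {hu : G.Adj u z} {hv : G.Adj z v} {D : G.Walk v b} {P : G.Walk a b}
    (hPdef : P = A.append (Walk.cons hu (Walk.cons hv D)))
    (hP : IsLongestPath G P) (hx : x ∉ P.support)
    (hzc : M.center z = M.center x) (hz'D : z' ∈ D.support)
    (hz'c : M.center z' = M.center x) (hzz' : z' ≠ z) : False := by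
  have hsupP : P.support = A.support ++ z :: D.support := by
    rw [hPdef]; simp [Walk.support_append]
  have hzP : z ∈ P.support := by rw [hsupP]; simp
  have hz'P : z' ∈ P.support := by rw [hsupP]; simp [hz'D]
  have hxz : x ≠ z := fun h => hx (h ▸ hzP)
  have hxz' : x ≠ z' := fun h => hx (h ▸ hz'P)
  have hXx : M.center x ∈ insert (M.center x) (M.leaves x) := Set.mem_insert _ _
  have hXz : M.center x ∈ insert (M.center z) (M.leaves z) :=
    Set.mem_insert_iff.2 (Or.inl hzc.symm)
  have hXz' : M.center x ∈ insert (M.center z') (M.leaves z') :=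
    Set.mem_insert_iff.2 (Or.inl hz'c.symm)
  have hadjxz : G.Adj x z := adj_of_common M hxz hXx hXz
  have hadjxz' : G.Adj x z' := adj_of_common M hxz' hXx hXz'
  have hz'b : z' ≠ b := fun h => not_adj_end hP hx (h ▸ hadjxz')
  have hdzv : (⟨(z, v), hv⟩ : G.Dart) ∈ P.darts := by
    rw [hPdef]; simp [Walk.darts_append, Walk.darts_cons]
  have hz'v : z' ≠ v := by
    rintro rfl
    exact no_consec hP hx _ hdzv ⟨hadjxz, hadjxz'⟩
  obtain ⟨u', v', B, hu', hv', C, hDdef⟩ := split_at_interior D hz'D hz'v hz'b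
  have hPfull : P = A.append (Walk.cons hu (Walk.cons hv
      (B.append (Walk.cons hu' (Walk.cons hv' C))))) := by
    rw [hPdef, hDdef]
  have hsup2 : P.support = A.support ++ z :: (B.support ++ z' :: C.support) := by
    rw [hPfull]; simp [Walk.support_append]
  have hduz : (⟨(u, z), hu⟩ : G.Dart) ∈ P.darts := by
    rw [hPfull]; simp [Walk.darts_append, Walk.darts_cons]
  have hdu'z' : (⟨(u', z'), hu'⟩ : G.Dart) ∈ P.darts := by
    rw [hPfull]; simp [Walk.darts_append, Walk.darts_cons]
  have hdz'v' : (⟨(z', v'), hv'⟩ : G.Dart) ∈ P.darts := by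
    rw [hPfull]; simp [Walk.darts_append, Walk.darts_cons]
  have hnadju : ¬ G.Adj x u := fun h => no_consec hP hx _ hduz ⟨h, hadjxz⟩
  have hnadjv : ¬ G.Adj x v := fun h => no_consec hP hx _ hdzv ⟨hadjxz, h⟩
  have hnadju' : ¬ G.Adj x u' := fun h => no_consec hP hx _ hdu'z' ⟨h, hadjxz'⟩
  have hnadjv' : ¬ G.Adj x v' := fun h => no_consec hP hx _ hdz'v' ⟨hadjxz', h⟩
  have huP : u ∈ P.support := by
    rw [hsup2]; exact List.mem_append_left _ A.end_mem_support
  have hvP : v ∈ P.support := by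
    rw [hsup2]
    exact List.mem_append_right _ (List.mem_cons_of_mem _
      (List.mem_append_left _ B.start_mem_support))
  have hu'P : u' ∈ P.support := by
    rw [hsup2]
    exact List.mem_append_right _ (List.mem_cons_of_mem _
      (List.mem_append_left _ B.end_mem_support))
  have hv'P : v' ∈ P.support := by
    rw [hsup2]
    exact List.mem_append_right _ (List.mem_cons_of_mem _
      (List.mem_append_right _ (List.mem_cons_of_mem _ C.start_mem_support)))
  have hux : u ≠ x := fun h => hx (h ▸ huP)
  have hvx : v ≠ x := fun h => hx (h ▸ hvP)
  have hu'x : u' ≠ x := fun h => hx (h ▸ hu'P)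
  have hv'x : v' ≠ x := fun h => hx (h ▸ hv'P)
  obtain ⟨Y, hYu, hYlz, hYadj, hYnlx, hYne⟩ :=
    missing_leaf M hzc (fun h => hxz h.symm) hux hu.symm hnadju
  obtain ⟨Wv, hWv_mem, hWv_lz, hWv_adj, hWv_nlx, -⟩ :=
    missing_leaf M hzc (fun h => hxz h.symm) hvx hv hnadjv
  obtain ⟨Wu', hWu'_mem, hWu'_lz, hWu'_adj, hWu'_nlx, -⟩ :=
    missing_leaf M hz'c (fun h => hxz' h.symm) hu'x hu'.symm hnadju'
  have hWvY : Wv = Y := missing_unique M x hWv_adj hYadj hWv_nlx hYnlx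
  have hWu'Y : Wu' = Y := missing_unique M x hWu'_adj hYadj hWu'_nlx hYnlx
  subst hWvY
  subst hWu'Y
  -- distinctness facts from nodup of P.support
  have hnd := hP.1.support_nodup
  rw [hsup2] at hnd
  rw [List.nodup_append] at hnd
  obtain ⟨hndA, hndR, hdisj⟩ := hnd
  rw [List.nodup_cons] at hndR
  obtain ⟨hzR, hndR'⟩ := hndR
  have huv : u ≠ v := by
    intro h
    subst h
    exact hdisj _ A.end_mem_support _
      (List.mem_cons_of_mem _ (List.mem_append_left _ B.start_mem_support)) rfl
  have hu'z : u' ≠ z := by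
    intro h
    subst h
    exact hzR (List.mem_append_left _ B.end_mem_support)
  -- new adjacencies
  have hadjuv : G.Adj u v := adj_of_common M huv hYu hWv_mem
  have hadju'z : G.Adj u' z :=
    adj_of_common M hu'z hWu'_mem (Set.mem_insert_of_mem _ hYlz)
  have hadjzx : G.Adj z x := hadjxz.symm
  -- the longer path
  have hQpath : (A.append (Walk.cons hadjuv (B.append (Walk.cons hadju'z
      (Walk.cons hadjzx (Walk.cons hadjxz' (Walk.cons hv' C))))))).IsPath := by
    rw [Walk.isPath_def]
    apply nodup_of_multiset_eq (l₂ := x :: P.support)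
    · rw [hsup2]
      simp only [Walk.support_append, Walk.support_cons, List.tail_cons]
      simp only [← Multiset.cons_coe, ← Multiset.coe_add]
      simp only [← Multiset.singleton_add]
      abel
    · exact List.nodup_cons.2 ⟨hx, hP.1.support_nodup⟩
  have hle := hP.2 _ hQpath
  rw [hPfull] at hle
  simp only [Walk.length_append, Walk.length_cons] at hle
  omega

end Aux

/-- For a finite full substar graph `G` with host tree `T`, a vertex `x` of `G` with
center `X = center x`, and a longest path `P` avoiding `x`: there is a neighbor `Y` of
`X` in `T` such that (i) every vertex of `P` either has its substar centered in the
component of `T - X` containing `Y` (i.e. lies in `C^X_Y`) or centered at `X` itself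
(i.e. lies in `C_X`); (ii) at most one vertex of `P` lies in `C_X`; and moreover, if
exactly one vertex of `P` lies in `C_X`, then `Y` is not a node of the substar of `x`. -/
theorem avoided_vertex_branch {V τ : Type*} [Fintype V] [Fintype τ]
    (G : SimpleGraph V) (T : SimpleGraph τ) (M : SubstarModel G T)
    (x : V) ⦃a b : V⦄ (P : G.Walk a b)
    (hP : IsLongestPath G P) (hx : x ∉ P.support) :
    ∃ Y : τ, T.Adj (M.center x) Y ∧
      (∀ z ∈ P.support,
        (∃ w : T.Walk Y (M.center z), M.center x ∉ w.support) ∨ M.center z = M.center x) ∧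
      {z : V | z ∈ P.support ∧ M.center z = M.center x}.ncard ≤ 1 ∧
      ({z : V | z ∈ P.support ∧ M.center z = M.center x}.ncard = 1 →
        Y ∉ insert (M.center x) (M.leaves x)) := by
  classical
  by_cases hex : ∃ z ∈ P.support, M.center z = M.center x
  · -- Case B : some vertex of P has center X
    obtain ⟨z, hzmem, hzc⟩ := hex
    have hxz : x ≠ z := fun h => hx (h ▸ hzmem)
    have hXz : M.center x ∈ insert (M.center z) (M.leaves z) :=
      Set.mem_insert_iff.2 (Or.inl hzc.symm)
    have hadjxz : G.Adj x z := adj_of_common M hxz (Set.mem_insert _ _) hXz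
    have hza : z ≠ a := fun h => not_adj_start hP hx (h ▸ hadjxz)
    have hzb : z ≠ b := fun h => not_adj_end hP hx (h ▸ hadjxz)
    obtain ⟨u, v, A, hu, hv, D, hPdef⟩ := split_at_interior P hzmem hza hzb
    have hsupP : P.support = A.support ++ z :: D.support := by
      rw [hPdef]; simp [Walk.support_append]
    -- uniqueness of the C_X vertex
    have huniq : ∀ z'' ∈ P.support, M.center z'' = M.center x → z'' = z := by
      intro z'' hmem hc
      by_contra hne
      rw [hsupP, List.mem_append, List.mem_cons] at hmem
      rcases hmem with hmem | hmem | hmem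
      · -- z'' comes before z : work with the reversed path
        have hPrev : P.reverse = D.reverse.append
            (Walk.cons hv.symm (Walk.cons hu.symm A.reverse)) := by
          rw [hPdef]
          simp only [Walk.reverse_append, Walk.reverse_cons, ← Walk.append_assoc,
            Walk.cons_nil_append, Walk.cons_append, Walk.nil_append]
        have hPrevLong : IsLongestPath G P.reverse := by
          refine ⟨hP.1.reverse, ?_⟩
          intro a' b' q hq
          rw [Walk.length_reverse]
          exact hP.2 q hq
        have hxrev : x ∉ P.reverse.support := by
          simpa [Walk.support_reverse] using hx
        exact two_centers_aux M hPrev hPrevLong hxrev hzc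
          (by simpa [Walk.support_reverse] using hmem) hc hne
      · exact hne hmem
      · exact two_centers_aux M hPdef hP hx hzc hmem hc hne
    have hSet : {w : V | w ∈ P.support ∧ M.center w = M.center x} = {z} := by
      ext w
      simp only [Set.mem_setOf_eq, Set.mem_singleton_iff]
      constructor
      · rintro ⟨h1, h2⟩; exact huniq w h1 h2
      · rintro rfl; exact ⟨hzmem, hzc⟩
    -- nodup facts
    have hnd := hP.1.support_nodup
    rw [hsupP, List.nodup_append, List.nodup_cons] at hnd
    obtain ⟨hndA, ⟨hzD, hndD⟩, hdisj⟩ := hnd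
    have hzA : z ∉ A.support := fun h => hdisj _ h _ List.mem_cons_self rfl
    -- analysis of the two neighbors of z on P
    have hdartu : (⟨(u, z), hu⟩ : G.Dart) ∈ P.darts := by
      rw [hPdef]; simp [Walk.darts_append, Walk.darts_cons]
    have hdartv : (⟨(z, v), hv⟩ : G.Dart) ∈ P.darts := by
      rw [hPdef]; simp [Walk.darts_append, Walk.darts_cons]
    have hnadju : ¬ G.Adj x u := fun h => no_consec hP hx _ hdartu ⟨h, hadjxz⟩
    have hnadjv : ¬ G.Adj x v := fun h => no_consec hP hx _ hdartv ⟨hadjxz, h⟩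
    have huP : u ∈ P.support := by
      rw [hsupP]; exact List.mem_append_left _ A.end_mem_support
    have hvP : v ∈ P.support := by
      rw [hsupP]
      exact List.mem_append_right _ (List.mem_cons_of_mem _ D.start_mem_support)
    have hux : u ≠ x := fun h => hx (h ▸ huP)
    have hvx : v ≠ x := fun h => hx (h ▸ hvP)
    obtain ⟨Y, hYu, hYlz, hYadj, hYnlx, hYne⟩ :=
      missing_leaf M hzc (fun h => hxz h.symm) hux hu.symm hnadju
    obtain ⟨Wv, hWv_mem, hWv_lz, hWv_adj, hWv_nlx, -⟩ :=
      missing_leaf M hzc (fun h => hxz h.symm) hvx hv hnadjv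
    have hWvY : Wv = Y := missing_unique M x hWv_adj hYadj hWv_nlx hYnlx
    rw [hWvY] at hWv_mem
    refine ⟨Y, hYadj, ?_, ?_, ?_⟩
    · -- (i) connectivity
      intro z₀ hz₀
      rw [hsupP, List.mem_append, List.mem_cons] at hz₀
      have hcent : ∀ r ∈ P.support, r ≠ z → M.center r ≠ M.center x :=
        fun r hr hrz hc => hrz (huniq r hr hc)
      rcases hz₀ with hz₀ | hz₀ | hz₀
      · -- z₀ in the part before z : propagate along A.reverse
        left
        have hstart : ∃ q : T.Walk Y (M.center u), M.center x ∉ q.support := by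
          obtain ⟨r, hr⟩ := walk_to_mem M hYu
          refine ⟨r.reverse, fun hmem => ?_⟩
          rw [Walk.support_reverse, List.mem_reverse] at hmem
          rcases hr _ hmem with h | h
          · exact hcent u huP (fun h' => hzA (h' ▸ A.end_mem_support)) h.symm
          · exact hYne h.symm
        have hAdarts : ∀ e ∈ A.reverse.darts,
            ¬ (M.center x ∈ insert (M.center e.fst) (M.leaves e.fst) ∧
              M.center x ∈ insert (M.center e.snd) (M.leaves e.snd)) := by
          intro e he
          rw [Walk.darts_reverse, List.mem_reverse, List.mem_map] at he
          obtain ⟨d, hd, rfl⟩ := he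
          have hdP : d ∈ P.darts := by
            rw [hPdef]; rw [Walk.darts_append]
            exact List.mem_append_left _ hd
          intro ⟨h1, h2⟩
          exact darts_fact M hP hx d hdP ⟨h2, h1⟩
        have hAcent : ∀ r ∈ A.reverse.support, M.center r ≠ M.center x := by
          intro r hr
          rw [Walk.support_reverse, List.mem_reverse] at hr
          exact hcent r (by rw [hsupP]; exact List.mem_append_left _ hr)
            (fun h => hzA (h ▸ hr))
        exact propagate M A.reverse hAdarts hAcent hstart z₀
          (by rw [Walk.support_reverse, List.mem_reverse]; exact hz₀)
      · right; rw [hz₀]; exact hzc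
      · -- z₀ in the part after z : propagate along D
        left
        have hvz : v ≠ z := fun h => hzD (h ▸ D.start_mem_support)
        have hstart : ∃ q : T.Walk Y (M.center v), M.center x ∉ q.support := by
          obtain ⟨r, hr⟩ := walk_to_mem M hWv_mem
          refine ⟨r.reverse, fun hmem => ?_⟩
          rw [Walk.support_reverse, List.mem_reverse] at hmem
          rcases hr _ hmem with h | h
          · exact hcent v hvP hvz h.symm
          · exact hYne h.symm
        have hDdarts : ∀ e ∈ D.darts,
            ¬ (M.center x ∈ insert (M.center e.fst) (M.leaves e.fst) ∧
              M.center x ∈ insert (M.center e.snd) (M.leaves e.snd)) := by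
          intro e he
          refine darts_fact M hP hx e ?_
          rw [hPdef]; rw [Walk.darts_append, Walk.darts_cons, Walk.darts_cons]
          exact List.mem_append_right _ (List.mem_cons_of_mem _ (List.mem_cons_of_mem _ he))
        have hDcent : ∀ r ∈ D.support, M.center r ≠ M.center x := by
          intro r hr
          exact hcent r
            (by rw [hsupP]; exact List.mem_append_right _ (List.mem_cons_of_mem _ hr))
            (fun h => hzD (h ▸ hr))
        exact propagate M D hDdarts hDcent hstart z₀ hz₀
    · rw [hSet]; simp
    · intro _
      rw [Set.mem_insert_iff]
      push_neg
      exact ⟨hYne, hYnlx⟩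
  · -- Case A : no vertex of P has center X
    push_neg at hex
    have hca : M.center x ≠ M.center a := fun h => hex a P.start_mem_support h.symm
    obtain ⟨p0⟩ := M.isTree.isConnected.preconnected (M.center x) (M.center a)
    obtain ⟨Y, hY, D₀, hD₀⟩ := cons_of_ne (p0.toPath : T.Walk _ _) hca
    have hXnot : M.center x ∉ D₀.support := by
      have hnd := (p0.toPath.2).support_nodup
      rw [hD₀, Walk.support_cons, List.nodup_cons] at hnd
      exact hnd.1
    have hempty : {z : V | z ∈ P.support ∧ M.center z = M.center x} = ∅ := by
      ext w
      simp only [Set.mem_setOf_eq, Set.mem_empty_iff_false, iff_false, not_and]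
      exact hex w
    refine ⟨Y, hY, ?_, ?_, ?_⟩
    · intro z hz
      left
      exact propagate M P (darts_fact M hP hx) hex ⟨D₀, hXnot⟩ z hz
    · rw [hempty]; simp
    · rw [hempty]; simp
end
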